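/- Let $G$ be a group containing an element of infinite order and let $A$ be an infinite set. Then there exists a bijective cellular automaton $\tau \colon A^G \to A^G$ which is not reversible. -/

import Mathlib

/-- `τ` is a cellular automaton over the group `G` and alphabet `A`:
there are a finite memory set `M ⊆ G` and a local defining map
`μ : A^M → A` with `τ(x)(g) = μ((g⁻¹ · x)|_M)`; note `(g⁻¹ · x)(m) = x (g * m)`. -/
def IsCellularAutomaton {G A : Type*} [Group G] (τ : (G → A) → (G → A)) : Prop :=
  ∃ (M : Finset G) (μ : (M → A) → A),
    ∀ (x : G → A) (g : G), τ x g = μ (fun m => x (g * m.val))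

namespace CAConstruction

variable {G : Type*} [Group G] {A : Type*}

def Bf (g₀ : G) (κ : G → ℕ) (c : G → Bool) : ℕ → G → Bool
  | 0, g => c g
  | n+1, g => xor (c g) (if κ (g * g₀) < κ g then Bf g₀ κ c n (g * g₀) else false)

lemma Bf_of_not {g₀ : G} {κ : G → ℕ} {c : G → Bool} {g : G}
    (h : ¬ κ (g * g₀) < κ g) : ∀ n, Bf g₀ κ c n g = c g
  | 0 => rfl
  | n+1 => by simp [Bf, h]

lemma Bf_congr {g₀ : G} {κ : G → ℕ} {c : G → Bool} :
    ∀ n m g, κ g ≤ n → κ g ≤ m → Bf g₀ κ c n g = Bf g₀ κ c m g := by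
  intro n
  induction n with
  | zero =>
    intro m g hg _
    have h : ¬ κ (g * g₀) < κ g := by omega
    rw [Bf_of_not h, Bf_of_not h]
  | succ n ih =>
    intro m g hg hm
    by_cases hc : κ (g * g₀) < κ g
    · obtain ⟨m', rfl⟩ : ∃ m', m = m' + 1 := ⟨m - 1, by omega⟩
      simp only [Bf, if_pos hc]
      rw [ih m' (g * g₀) (by omega) (by omega)]
    · rw [Bf_of_not hc, Bf_of_not hc]

lemma Bf_false (g₀ : G) (κ : G → ℕ) : ∀ n g, Bf g₀ κ (fun _ => false) n g = false
  | 0, _ => rfl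
  | n+1, g => by simp [Bf, Bf_false g₀ κ n]

def Tmap (g₀ : G) (z : G → ℕ × Bool × A) : G → ℕ × Bool × A := fun g =>
  ⟨(z g).1, xor (z g).2.1 ((z (g * g₀)).2.1 && decide ((z (g * g₀)).1 < (z g).1)),
    (z g).2.2⟩

def Smap (g₀ : G) (z : G → ℕ × Bool × A) : G → ℕ × Bool × A := fun g =>
  ⟨(z g).1, Bf g₀ (fun h => (z h).1) (fun h => (z h).2.1) ((z g).1) g, (z g).2.2⟩

lemma Tmap_Smap (g₀ : G) (z : G → ℕ × Bool × A) : Tmap g₀ (Smap g₀ z) = z := by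
  funext g
  show (⟨(z g).1,
      xor (Bf g₀ (fun h => (z h).1) (fun h => (z h).2.1) ((z g).1) g)
        ((Bf g₀ (fun h => (z h).1) (fun h => (z h).2.1) ((z (g * g₀)).1) (g * g₀)) &&
          decide ((z (g * g₀)).1 < (z g).1)),
      (z g).2.2⟩ : ℕ × Bool × A) = z g
  set κ : G → ℕ := fun h => (z h).1 with hκ
  set c : G → Bool := fun h => (z h).2.1 with hc'
  conv_rhs => rw [← Prod.mk.eta (p := z g), ← Prod.mk.eta (p := (z g).2)]
  simp only [Prod.mk.injEq]
  refine ⟨trivial, ?_, trivial⟩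
  by_cases hc : κ (g * g₀) < κ g
  · obtain ⟨m, hm⟩ : ∃ m, κ g = m + 1 := ⟨κ g - 1, by omega⟩
    have hBg : Bf g₀ κ c (κ g) g = xor (c g) (Bf g₀ κ c (κ (g * g₀)) (g * g₀)) := by
      rw [hm]
      simp only [Bf, if_pos hc]
      rw [Bf_congr m (κ (g * g₀)) (g * g₀) (by omega) le_rfl]
    rw [hBg]
    have hd : decide ((z (g * g₀)).1 < (z g).1) = true := decide_eq_true hc
    rw [hd, Bool.and_true]
    simp [hc', hκ]
  · rw [Bf_of_not hc]
    have hd : decide ((z (g * g₀)).1 < (z g).1) = false := decide_eq_false hc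
    rw [hd, Bool.and_false]
    simp [hc']

lemma Smap_Tmap (g₀ : G) (z : G → ℕ × Bool × A) : Smap g₀ (Tmap g₀ z) = z := by
  funext g
  have main : ∀ n g, (z g).1 ≤ n →
      Bf g₀ (fun h => (z h).1)
        (fun h => xor (z h).2.1 ((z (h * g₀)).2.1 && decide ((z (h * g₀)).1 < (z h).1)))
        ((z g).1) g = (z g).2.1 := by
    intro n
    induction n with
    | zero =>
      intro g hg
      have hc : ¬ (z (g * g₀)).1 < (z g).1 := by omega
      rw [Bf_of_not hc]
      simp [hc]
    | succ n ih =>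
      intro g hg
      by_cases hc : (z (g * g₀)).1 < (z g).1
      · obtain ⟨m, hm⟩ : ∃ m, (z g).1 = m + 1 := ⟨(z g).1 - 1, by omega⟩
        rw [hm]
        simp only [Bf, if_pos hc]
        rw [Bf_congr m ((z (g * g₀)).1) (g * g₀) (by omega) le_rfl,
          ih (g * g₀) (by omega)]
        simp [hc, Bool.xor_assoc]
      · rw [Bf_of_not hc]
        simp [hc]
  show (⟨(z g).1,
      Bf g₀ (fun h => (z h).1)
        (fun h => xor (z h).2.1 ((z (h * g₀)).2.1 && decide ((z (h * g₀)).1 < (z h).1)))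
        ((z g).1) g,
      (z g).2.2⟩ : ℕ × Bool × A) = z g
  conv_rhs => rw [← Prod.mk.eta (p := z g), ← Prod.mk.eta (p := (z g).2)]
  simp only [Prod.mk.injEq]
  exact ⟨trivial, main ((z g).1) g le_rfl, trivial⟩

lemma psi_ex (A : Type*) [Infinite A] : Nonempty (A ≃ ℕ × Bool × A) := by
  have h1 : Nonempty (ℕ × A ≃ A) := by
    apply Cardinal.eq.mp
    have h := Cardinal.mk_prod ℕ A
    rw [h]
    simp only [Cardinal.mk_nat, Cardinal.lift_aleph0, Cardinal.lift_id, Cardinal.lift_id',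
      Cardinal.lift_uzero]
    have ha : Cardinal.aleph0 ≤ Cardinal.mk A := Cardinal.infinite_iff.mp inferInstance
    exact Cardinal.mul_eq_right ha ha Cardinal.aleph0_ne_zero
  obtain ⟨e⟩ := h1
  exact ⟨(e.symm.trans
    ((Equiv.boolProdNatEquivNat.symm.trans (Equiv.prodComm Bool ℕ)).prodCongr
      (Equiv.refl A))).trans (Equiv.prodAssoc ℕ Bool A)⟩

def tau (g₀ : G) (ψ : A ≃ ℕ × Bool × A) (x : G → A) : G → A :=
  fun g => ψ.symm (Tmap g₀ (fun h => ψ (x h)) g)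

def sig (g₀ : G) (ψ : A ≃ ℕ × Bool × A) (y : G → A) : G → A :=
  fun g => ψ.symm (Smap g₀ (fun h => ψ (y h)) g)

lemma sig_tau (g₀ : G) (ψ : A ≃ ℕ × Bool × A) :
    Function.LeftInverse (sig g₀ ψ) (tau g₀ ψ) := by
  intro x
  funext g
  have hz : (fun h => ψ (tau g₀ ψ x h)) = Tmap g₀ (fun h => ψ (x h)) := by
    funext h; simp [tau]
  simp only [sig, hz, Smap_Tmap, Equiv.symm_apply_apply]

lemma tau_sig (g₀ : G) (ψ : A ≃ ℕ × Bool × A) :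
    Function.RightInverse (sig g₀ ψ) (tau g₀ ψ) := by
  intro y
  funext g
  have hz : (fun h => ψ (sig g₀ ψ y h)) = Smap g₀ (fun h => ψ (y h)) := by
    funext h; simp [sig]
  simp only [tau, hz, Tmap_Smap, Equiv.symm_apply_apply]

lemma tau_isCA (g₀ : G) (ψ : A ≃ ℕ × Bool × A) : IsCellularAutomaton (tau g₀ ψ) := by
  classical
  refine ⟨({1, g₀} : Finset G), fun v =>
    ψ.symm ⟨(ψ (v ⟨1, by simp⟩)).1,
      xor (ψ (v ⟨1, by simp⟩)).2.1
        ((ψ (v ⟨g₀, by simp⟩)).2.1 && decide ((ψ (v ⟨g₀, by simp⟩)).1 < (ψ (v ⟨1, by simp⟩)).1)),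
      (ψ (v ⟨1, by simp⟩)).2.2⟩, ?_⟩
  intro x g
  simp only [tau, Tmap, mul_one]

end CAConstruction

theorem exists_bijective_ca_not_reversible
    {G : Type*} [Group G] (g₀ : G) (hg₀ : ¬ IsOfFinOrder g₀)
    {A : Type*} [Infinite A] :
    ∃ τ : (G → A) → (G → A), IsCellularAutomaton τ ∧
      Function.Bijective τ ∧ ¬ IsCellularAutomaton (Function.invFun τ) := by
  classical
  obtain ⟨ψ⟩ := CAConstruction.psi_ex A
  set τ := CAConstruction.tau g₀ ψ with hτ
  have hL := CAConstruction.sig_tau g₀ ψ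
  have hR := CAConstruction.tau_sig g₀ ψ
  have hbij : Function.Bijective τ := ⟨hL.injective, hR.surjective⟩
  have hinvFun : Function.invFun τ = CAConstruction.sig g₀ ψ := by
    funext y
    have h1 : τ (Function.invFun τ y) = y :=
      Function.invFun_eq ⟨CAConstruction.sig g₀ ψ y, hR y⟩
    have h2 : τ (CAConstruction.sig g₀ ψ y) = y := hR y
    exact hbij.injective (h1.trans h2.symm)
  refine ⟨τ, CAConstruction.tau_isCA g₀ ψ, hbij, ?_⟩
  rw [hinvFun]
  rintro ⟨M, μ, hμ⟩
  -- injectivity of powers of g₀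
  have key : ∀ i j : ℕ, i < j → g₀ ^ i = g₀ ^ j → False := by
    intro i j hij h
    apply hg₀
    apply isOfFinOrder_iff_pow_eq_one.mpr
    refine ⟨j - i, by omega, ?_⟩
    have hmul : g₀ ^ (j - i) * g₀ ^ i = g₀ ^ j := by
      rw [← pow_add]; congr 1; omega
    have : g₀ ^ (j - i) * g₀ ^ i = 1 * g₀ ^ i := by rw [hmul, one_mul, h]
    exact mul_right_cancel this
  have hinj : Function.Injective (fun j : ℕ => g₀ ^ j) := by
    intro i j h
    by_contra hne
    rcases lt_or_gt_of_ne hne with h' | h'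
    · exact key i j h' h
    · exact key j i h' h.symm
  -- choose N with g₀ ^ N ∉ M
  have hex : ∃ n : ℕ, g₀ ^ n ∉ M := by
    by_contra h
    push_neg at h
    exact (Set.infinite_of_injective_forall_mem hinj h) M.finite_toSet
  obtain ⟨N, hNM⟩ := hex
  -- the witness configurations
  set a₀ : A := Classical.arbitrary A with ha₀
  set K : G → ℕ := fun g => ∑ j ∈ Finset.range (N + 1), if g = g₀ ^ j then N - j else 0
    with hK
  have hKpow : ∀ j, j ≤ N → K (g₀ ^ j) = N - j := by
    intro j hj
    show (∑ i ∈ Finset.range (N + 1), if g₀ ^ j = g₀ ^ i then N - i else 0) = N - j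
    rw [Finset.sum_eq_single j]
    · rw [if_pos rfl]
    · intro b _ hbj
      rw [if_neg]
      intro h
      exact hbj (hinj h.symm)
    · intro h
      exact absurd (Finset.mem_range.mpr (by omega)) h
  set y : G → A := fun g => ψ.symm ⟨K g, false, a₀⟩ with hy
  set y' : G → A := fun g => ψ.symm ⟨K g, if g = g₀ ^ N then true else false, a₀⟩ with hy'
  -- same values on the memory window at 1
  have hwin : (fun m : M => y (1 * m.val)) = (fun m : M => y' (1 * m.val)) := by
    funext mm
    simp only [hy, hy', one_mul]
    congr 2
    have hne : mm.val ≠ g₀ ^ N := by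
      intro h
      exact hNM (h ▸ mm.prop)
    rw [if_neg hne]
  have heq : CAConstruction.sig g₀ ψ y 1 = CAConstruction.sig g₀ ψ y' 1 := by
    rw [hμ y 1, hμ y' 1, hwin]
  -- compute both sides
  have hψy : (fun h => ψ (y h)) = (fun h : G => ((K h, false, a₀) : ℕ × Bool × A)) := by
    funext h; rw [hy]; simp
  have hψy' : (fun h => ψ (y' h)) =
      (fun h : G => ((K h, if h = g₀ ^ N then true else false, a₀) : ℕ × Bool × A)) := by
    funext h; rw [hy']; simp
  have hsy : CAConstruction.sig g₀ ψ y 1 = ψ.symm ⟨K 1, false, a₀⟩ := by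
    show ψ.symm (CAConstruction.Smap g₀ (fun h => ψ (y h)) 1) = _
    rw [hψy]
    have hb : CAConstruction.Bf g₀ (fun h : G => K h) (fun _ : G => false) (K 1) 1 = false :=
      CAConstruction.Bf_false g₀ _ _ 1
    show ψ.symm ⟨K 1, CAConstruction.Bf g₀ (fun h : G => K h) (fun _ : G => false) (K 1) 1, a₀⟩
      = ψ.symm ⟨K 1, false, a₀⟩
    rw [hb]
  have hK1 : K 1 = N := by
    have := hKpow 0 (Nat.zero_le N)
    simpa using this
  set c' : G → Bool := fun h => if h = g₀ ^ N then true else false with hc'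
  have hchain : ∀ d j, j + d = N →
      CAConstruction.Bf g₀ (fun h : G => K h) c' d (g₀ ^ j) = true := by
    intro d
    induction d with
    | zero =>
      intro j hj
      have hjN : j = N := by omega
      show c' (g₀ ^ j) = true
      rw [hc', hjN]
      simp
    | succ d ih =>
      intro j hj
      have hlt : K (g₀ ^ j * g₀) < K (g₀ ^ j) := by
        rw [← pow_succ, hKpow (j + 1) (by omega), hKpow j (by omega)]
        omega
      have hne : g₀ ^ j ≠ g₀ ^ N := by
        intro h
        have := hinj h
        omega
      have hcj : c' (g₀ ^ j) = false := by rw [hc']; simp [hne]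
      show xor (c' (g₀ ^ j)) (if K (g₀ ^ j * g₀) < K (g₀ ^ j) then
        CAConstruction.Bf g₀ (fun h : G => K h) c' d (g₀ ^ j * g₀) else false) = true
      rw [hcj, if_pos hlt,
        show g₀ ^ j * g₀ = g₀ ^ (j + 1) from (pow_succ g₀ j).symm,
        ih (j + 1) (by omega)]
      rfl
  have hsy' : CAConstruction.sig g₀ ψ y' 1 = ψ.symm ⟨K 1, true, a₀⟩ := by
    show ψ.symm (CAConstruction.Smap g₀ (fun h => ψ (y' h)) 1) = _
    rw [hψy']
    show ψ.symm ⟨K 1, CAConstruction.Bf g₀ (fun h : G => K h) c' (K 1) 1, a₀⟩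
      = ψ.symm ⟨K 1, true, a₀⟩
    have hb : CAConstruction.Bf g₀ (fun h : G => K h) c' (K 1) 1 = true := by
      rw [hK1, show (1 : G) = g₀ ^ 0 from (pow_zero g₀).symm]
      exact hchain N 0 (by omega)
    rw [hb]
  rw [hsy, hsy'] at heq
  have := ψ.symm.injective heq
  simp at this
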